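/- Let C be a constant weight [n,k]_q code. Then the map sending each subcode C' of C to its support Supp(C') ⊆ {1,…,n} is injective: if two subcodes of C have the same support, they are equal. -/

import Mathlib

/-- The support of a subcode `D` of `F_q^n`. -/
def codeSupp {F : Type*} [Field F] {n : ℕ} (D : Submodule F (Fin n → F)) : Set (Fin n) :=
  {x | ∃ d ∈ D, d x ≠ 0}

open Finset

section aux
variable {F : Type*} [Field F] [Fintype F] {n : ℕ}

open scoped Classical

/-- Kernel-of-evaluation counting: for `x` in the support of `D`, the codewords of `D`
vanishing at `x` form a subspace of index `q`. -/
lemma card_ker_eval (D : Submodule F (Fin n → F)) {x : Fin n} (hx : x ∈ codeSupp D) :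
    (univ.filter fun c : D => (c : Fin n → F) x = 0).card * Fintype.card F
      = Nat.card D := by
  obtain ⟨c, hc, hcx⟩ := hx
  set φ : D →ₗ[F] F := (LinearMap.proj x).comp D.subtype with hφ
  have hsurj : Function.Surjective φ := by
    have hne : LinearMap.range φ ≠ ⊥ := by
      intro h
      have : φ ⟨c, hc⟩ = 0 := by
        have : φ ⟨c, hc⟩ ∈ LinearMap.range φ := LinearMap.mem_range_self _ _
        rw [h] at this; exact (Submodule.mem_bot F).mp this
      exact hcx this
    rw [← LinearMap.range_eq_top]
    rcases eq_bot_or_eq_top (LinearMap.range φ) with h | h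
    · exact absurd h hne
    · exact h
  have hquot : Nat.card (D ⧸ LinearMap.ker φ) = Fintype.card F := by
    rw [Nat.card_congr (φ.quotKerEquivOfSurjective hsurj).toEquiv]
    exact Nat.card_eq_fintype_card
  have hcardker : Nat.card (LinearMap.ker φ) =
      (univ.filter fun c : D => (c : Fin n → F) x = 0).card := by
    rw [Nat.card_eq_fintype_card]
    rw [← Fintype.card_subtype]
    apply Fintype.card_congr
    apply Equiv.subtypeEquivRight
    intro a
    simp [hφ, LinearMap.mem_ker]
  rw [← hcardker, ← hquot, ← Submodule.card_eq_card_quotient_mul_card]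

/-- The fundamental counting formula for subcodes of a constant weight code. -/
lemma key_formula {d : ℕ} (C : Submodule F (Fin n → F))
    (hconst : ∀ c ∈ C, c ≠ 0 → ({x | c x ≠ 0} : Set (Fin n)).ncard = d)
    (D : Submodule F (Fin n → F)) (hD : D ≤ C) :
    (Fintype.card F - 1) * Nat.card D * (codeSupp D).ncard
      = Fintype.card F * (Nat.card D - 1) * d := by
  set q := Fintype.card F with hq
  set N := Nat.card D with hN
  -- total weight
  have hwt : ∀ c : D, (c : Fin n → F) ≠ 0 →
      (univ.filter fun x => (c : Fin n → F) x ≠ 0).card = d := by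
    intro c hc
    have := hconst c (hD c.2) hc
    rw [← this]
    rw [show ({x | (c : Fin n → F) x ≠ 0} : Set (Fin n)) =
      ↑(univ.filter fun x => (c : Fin n → F) x ≠ 0) by ext y; simp]
    rw [Set.ncard_coe_finset]
  have hsum1 : (∑ c : D, (univ.filter fun x => (c : Fin n → F) x ≠ 0).card)
      = (N - 1) * d := by
    rw [← Finset.sum_erase_add _ _ (Finset.mem_univ (0 : D))]
    have h0 : ((univ : Finset (Fin n)).filter fun x => ((0 : D) : Fin n → F) x ≠ 0).card = 0 := by
      simp
    rw [h0, add_zero]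
    rw [Finset.sum_congr rfl (fun c hc => hwt c ?_)]
    · rw [Finset.sum_const, Finset.card_erase_of_mem (Finset.mem_univ _), smul_eq_mul,
        Finset.card_univ, hN, Nat.card_eq_fintype_card]
    · intro h
      have : c = 0 := Subtype.ext h
      exact (Finset.mem_erase.mp hc).1 this
  -- double counting
  have hswap : (∑ c : D, (univ.filter fun x => (c : Fin n → F) x ≠ 0).card)
      = ∑ x : Fin n, (univ.filter fun c : D => (c : Fin n → F) x ≠ 0).card := by
    simp_rw [Finset.card_filter]
    exact Finset.sum_comm
  -- per-column count
  have hcol : ∀ x ∈ (codeSupp D).toFinset,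
      q * (univ.filter fun c : D => (c : Fin n → F) x ≠ 0).card = N * (q - 1) := by
    intro x hx
    rw [Set.mem_toFinset] at hx
    have hker := card_ker_eval D hx
    have hsplit := Finset.card_filter_add_card_filter_not
      (s := (univ : Finset D)) (p := fun c : D => (c : Fin n → F) x = 0)
    simp only [Finset.card_univ] at hsplit
    set K := (univ.filter fun c : D => (c : Fin n → F) x = 0).card
    set A := (univ.filter fun c : D => ¬ (c : Fin n → F) x = 0).card
    have hKA : K + A = N := by rw [hsplit, hN, Nat.card_eq_fintype_card]
    have hKq : K * q = N := hker
    have hA : q * A + N = q * N := by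
      rw [← hKq]; nlinarith [hKA]
    have hq1 : 1 ≤ q := Fintype.card_pos
    have h3 : N * (q - 1) + N = N * q := by
      have : (q - 1) + 1 = q := Nat.succ_pred_eq_of_pos hq1
      calc N * (q - 1) + N = N * ((q - 1) + 1) := by ring
        _ = N * q := by rw [this]
    show q * A = N * (q - 1)
    have hcomm : q * N = N * q := mul_comm q N
    linarith [hA, h3, hcomm]

  -- zero outside support
  have hout : ∀ x ∈ (univ : Finset (Fin n)), x ∉ (codeSupp D).toFinset →
      (univ.filter fun c : D => (c : Fin n → F) x ≠ 0).card = 0 := by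
    intro x _ hx
    rw [Set.mem_toFinset] at hx
    rw [Finset.card_eq_zero, Finset.filter_eq_empty_iff]
    intro c _
    simp only [ne_eq, not_not]
    by_contra h
    exact hx ⟨c, c.2, h⟩
  have hS : (codeSupp D).ncard = (codeSupp D).toFinset.card :=
    Set.ncard_eq_toFinset_card' _
  -- combine
  have htotal : q * ((N - 1) * d) = (codeSupp D).toFinset.card * (N * (q - 1)) := by
    rw [← hsum1, hswap, Finset.mul_sum]
    rw [← Finset.sum_subset (Finset.subset_univ (codeSupp D).toFinset)
      (fun x hx hx' => by rw [hout x hx hx', mul_zero])]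
    rw [Finset.sum_congr rfl hcol, Finset.sum_const, smul_eq_mul]
  rw [hS]
  nlinarith [htotal]

lemma codeSupp_mono {D₁ D₂ : Submodule F (Fin n → F)} (h : D₁ ≤ D₂) :
    codeSupp D₁ ⊆ codeSupp D₂ := fun x ⟨c, hc, hcx⟩ => ⟨c, h hc, hcx⟩

lemma subcode_le {d : ℕ} (C : Submodule F (Fin n → F))
    (hconst : ∀ c ∈ C, c ≠ 0 → ({x | c x ≠ 0} : Set (Fin n)).ncard = d)
    (D₁ D₂ : Submodule F (Fin n → F)) (hD₁ : D₁ ≤ C) (hD₂ : D₂ ≤ C)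
    (hsupp : codeSupp D₁ = codeSupp D₂) : D₂ ≤ D₁ := by
  intro c hc
  by_contra hcD₁
  set q := Fintype.card F with hq
  have hq2 : 2 ≤ q := Fintype.one_lt_card
  set D' := D₁ ⊔ Submodule.span F {c} with hD'def
  have hD'C : D' ≤ C := sup_le hD₁ ((Submodule.span_singleton_le_iff_mem _ _).mpr (hD₂ hc))
  have hcD' : c ∈ D' := Submodule.mem_sup_right (Submodule.mem_span_singleton_self c)
  -- supports agree
  have hsuppD' : codeSupp D' = codeSupp D₁ := by
    apply Set.Subset.antisymm
    · rintro x ⟨e, he, hex⟩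
      obtain ⟨a, ha, b, hb, rfl⟩ := Submodule.mem_sup.mp he
      obtain ⟨t, rfl⟩ := Submodule.mem_span_singleton.mp hb
      by_cases hax : a x ≠ 0
      · exact ⟨a, ha, hax⟩
      · push_neg at hax
        have : c x ≠ 0 := by
          intro h0
          apply hex
          simp [hax, h0]
        rw [hsupp]
        exact ⟨c, hc, this⟩
    · exact codeSupp_mono le_sup_left
  -- cardinalities
  set N := Nat.card D₁ with hN
  set N' := Nat.card D' with hN'
  have hlt : D₁ < D' := lt_of_le_of_ne le_sup_left (fun h => hcD₁ (h ▸ hcD'))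
  have hNN' : N < N' := by
    rw [hN, hN', Nat.card_eq_fintype_card, Nat.card_eq_fintype_card]
    have hss : (D₁ : Set (Fin n → F)) ⊂ (D' : Set (Fin n → F)) :=
      SetLike.coe_ssubset_coe.mpr hlt
    have h := Set.ncard_lt_ncard hss (Set.toFinite _)
    rwa [← Nat.card_coe_set_eq, ← Nat.card_coe_set_eq,
      Nat.card_eq_fintype_card, Nat.card_eq_fintype_card] at h
  have hNpos : 1 ≤ N := Nat.one_le_iff_ne_zero.mpr (Nat.card_ne_zero.mpr ⟨⟨⟨0, D₁.zero_mem⟩⟩, inferInstance⟩)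
  have h1 := key_formula C hconst D₁ hD₁
  have h2 := key_formula C hconst D' hD'C
  rw [hsuppD'] at h2
  rw [← hq, ← hN] at h1
  rw [← hq, ← hN'] at h2
  set S := (codeSupp D₁).ncard
  -- derive d = 0
  have hd0 : d = 0 := by
    by_contra hd
    have hd1 : 1 ≤ d := Nat.one_le_iff_ne_zero.mpr hd
    -- N' * h1 = N * h2
    have e1 : (q - 1) * N * S * N' = q * (N - 1) * d * N' := by rw [h1]
    have e2 : (q - 1) * N' * S * N = q * (N' - 1) * d * N := by rw [h2]
    have : q * (N - 1) * d * N' = q * (N' - 1) * d * N := by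
      rw [← e1, ← e2]; ring
    -- now pure arithmetic: q ≥ 2, 1 ≤ N < N', d ≥ 1 gives contradiction
    have hN'1 : 1 ≤ N' := le_of_lt (lt_of_le_of_lt hNpos hNN')
    zify [hNpos, hN'1] at this
    have h5 : (q:ℤ) * d * (N' - N) = 0 := by linear_combination -this
    have hpos : (0:ℤ) < (q:ℤ) * d * (N' - N) := by
      have hq0 : (0:ℤ) < q := by exact_mod_cast (show 0 < q by omega)
      have hd0' : (0:ℤ) < d := by exact_mod_cast hd1
      have hNN : (0:ℤ) < (N':ℤ) - N := by
        have := (Nat.cast_lt (α := ℤ)).mpr hNN'; linarith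
      exact mul_pos (mul_pos hq0 hd0') hNN
    exact hpos.ne' h5
  -- d = 0 means C has no nonzero codewords, contradicting c ∉ D₁
  have hc0 : c ≠ 0 := fun h => hcD₁ (h ▸ D₁.zero_mem)
  have := hconst c (hD₂ hc) hc0
  rw [hd0, Set.ncard_eq_zero (Set.toFinite _)] at this
  apply hc0
  funext x
  have : x ∉ ({x | c x ≠ 0} : Set (Fin n)) := this ▸ Set.notMem_empty x
  simpa using this

end aux

/-- For a constant weight code `C`, the map sending a subcode of `C` to its support is
injective: two subcodes of `C` with the same support are equal. -/
theorem subcode_supp_injective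
    {F : Type*} [Field F] [Fintype F] {n k d : ℕ}
    (C : Submodule F (Fin n → F)) (hk : Module.finrank F C = k)
    (hconst : ∀ c ∈ C, c ≠ 0 → ({x | c x ≠ 0} : Set (Fin n)).ncard = d)
    (D₁ D₂ : Submodule F (Fin n → F)) (hD₁ : D₁ ≤ C) (hD₂ : D₂ ≤ C)
    (hsupp : codeSupp D₁ = codeSupp D₂) :
    D₁ = D₂ := by
  exact le_antisymm (subcode_le C hconst D₂ D₁ hD₂ hD₁ hsupp.symm)
    (subcode_le C hconst D₁ D₂ hD₁ hD₂ hsupp)
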